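/- Let V be a finite-dimensional real vector space with a GCS given by a maximally isotropic complex subspace E ⊂ V_ℂ ⊕ V_ℂ* with E ∩ Ē = 0, and let W ⊆ V be any real subspace. Then the complex dimension of E_W equals the real dimension of W (so E_W is a maximally isotropic subspace of W_ℂ ⊕ W_ℂ*), and the complex dimension of E_{V/W} equals the real dimension of V/W. -/

import Mathlib

open Module LinearMap TensorProduct

/-- The complexification `V_ℂ = ℂ ⊗_ℝ V`. -/
abbrev Cxf (V : Type*) [AddCommGroup V] [Module ℝ V] := ℂ ⊗[ℝ] V

section Conj

variable (V : Type*) [AddCommGroup V] [Module ℝ V]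

/-- The complex conjugation on `V_ℂ = ℂ ⊗_ℝ V`. -/
noncomputable def conjC : Cxf V →ₗ[ℝ] Cxf V :=
  TensorProduct.map Complex.conjAe.toLinearMap LinearMap.id

lemma conjC_smul (c : ℂ) (x : Cxf V) :
    conjC V (c • x) = (starRingEnd ℂ c) • conjC V x := by
  induction x using TensorProduct.induction_on with
  | zero => simp
  | tmul a v =>
      simp [conjC, TensorProduct.smul_tmul', map_mul, Complex.conjAe_coe]
  | add x y hx hy =>
      simp [smul_add, map_add, hx, hy]

/-- The conjugation induced on the complex dual of `V_ℂ`. -/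
noncomputable def conjD : Module.Dual ℂ (Cxf V) →ₗ[ℝ] Module.Dual ℂ (Cxf V) where
  toFun f :=
    { toFun := fun x => starRingEnd ℂ (f (conjC V x))
      map_add' := by intro x y; simp [map_add]
      map_smul' := by intro c x; simp [conjC_smul, map_smul] }
  map_add' f g := by ext x; simp
  map_smul' r f := by ext x; simp

/-- The conjugation on `V_ℂ ⊕ V_ℂ*`. -/
noncomputable def conjP :
    (Cxf V × Module.Dual ℂ (Cxf V)) →ₗ[ℝ] (Cxf V × Module.Dual ℂ (Cxf V)) :=
  LinearMap.prodMap (conjC V) (conjD V)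

end Conj

section Pairing

variable (V : Type*) [AddCommGroup V] [Module ℝ V]

/-- The ℂ-bilinear extension of the standard pairing, on `V_ℂ ⊕ V_ℂ*`. -/
noncomputable def gcPairC (x y : Cxf V × Module.Dual ℂ (Cxf V)) : ℂ :=
  -(1/2) * (x.2 y.1 + y.2 x.1)

/-- A GCS on `V`, in terms of a maximally isotropic subspace `E ⊂ V_ℂ ⊕ V_ℂ*`
with `E ∩ Ē = 0`. -/
noncomputable def IsGCSSub [FiniteDimensional ℝ V]
    (E : Submodule ℂ (Cxf V × Module.Dual ℂ (Cxf V))) : Prop :=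
  (∀ x ∈ E, ∀ y ∈ E, gcPairC V x y = 0) ∧
  Module.finrank ℂ ↥E = Module.finrank ℝ V ∧
  (E.restrictScalars ℝ) ⊓ ((E.restrictScalars ℝ).map (conjP V)) = ⊥

end Pairing

section Induced

variable {V : Type*} [AddCommGroup V] [Module ℝ V]

/-- The complexified inclusion `W_ℂ → V_ℂ` of a real subspace `W ⊆ V`. -/
noncomputable def cxIncl (W : Submodule ℝ V) : Cxf ↥W →ₗ[ℂ] Cxf V :=
  LinearMap.baseChange ℂ W.subtype

/-- The subspace `E_W ⊆ W_ℂ ⊕ W_ℂ*` induced by `E ⊆ V_ℂ ⊕ V_ℂ*`: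
`E_W = {(w, f|_{W_ℂ}) : (w, f) ∈ E, w ∈ W_ℂ}`. -/
noncomputable def inducedSub (E : Submodule ℂ (Cxf V × Module.Dual ℂ (Cxf V)))
    (W : Submodule ℝ V) : Submodule ℂ (Cxf ↥W × Module.Dual ℂ (Cxf ↥W)) :=
  (E.comap ((cxIncl W).prodMap (LinearMap.id))).map
    ((LinearMap.id).prodMap ((cxIncl W).dualMap))

/-- `W` is a generalized complex subspace if `E_W ∩ Ē_W = 0`. -/
noncomputable def IsGCSubspace [FiniteDimensional ℝ V]
    (E : Submodule ℂ (Cxf V × Module.Dual ℂ (Cxf V))) (W : Submodule ℝ V) : Prop :=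
  ((inducedSub E W).restrictScalars ℝ) ⊓
    (((inducedSub E W).restrictScalars ℝ).map (conjP ↥W)) = ⊥

end Induced

/-- The subspace `E_{V/W} ⊆ (V/W)_ℂ ⊕ (V/W)_ℂ*` induced by `E ⊆ V_ℂ ⊕ V_ℂ*`:
`E_{V/W} = {(π(x), g) : (x, g ∘ π) ∈ E}` where `π : V_ℂ → (V/W)_ℂ`. -/
noncomputable def quotSub {V : Type*} [AddCommGroup V] [Module ℝ V]
    (E : Submodule ℂ (Cxf V × Module.Dual ℂ (Cxf V))) (W : Submodule ℝ V) :
    Submodule ℂ (Cxf (V ⧸ W) × Module.Dual ℂ (Cxf (V ⧸ W))) :=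
  (E.comap ((LinearMap.id).prodMap (LinearMap.baseChange ℂ W.mkQ).dualMap)).map
    ((LinearMap.baseChange ℂ W.mkQ).prodMap (LinearMap.id))


section Aux

open Submodule

variable {K : Type*} [Field K]

lemma auxMapProdMap {M N M' N' : Type*} [AddCommGroup M] [AddCommGroup N]
    [AddCommGroup M'] [AddCommGroup N'] [Module K M] [Module K N] [Module K M']
    [Module K N'] (f : M →ₗ[K] M') (g : N →ₗ[K] N') (p : Submodule K M)
    (q : Submodule K N) :
    (p.prod q).map (f.prodMap g) = (p.map f).prod (q.map g) := by
  ext ⟨x, y⟩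
  simp only [Submodule.mem_map, Submodule.mem_prod, LinearMap.prodMap_apply, Prod.mk.injEq,
    Prod.exists]
  constructor
  · rintro ⟨a, b, ⟨ha, hb⟩, h1, h2⟩
    exact ⟨⟨a, ha, h1⟩, ⟨b, hb, h2⟩⟩
  · rintro ⟨⟨a, ha, h1⟩, ⟨b, hb, h2⟩⟩
    exact ⟨a, b, ⟨ha, hb⟩, h1, h2⟩

lemma auxProdMapInjective {M N M' N' : Type*} [AddCommGroup M] [AddCommGroup N]
    [AddCommGroup M'] [AddCommGroup N'] [Module K M] [Module K N] [Module K M']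
    [Module K N'] (f : M →ₗ[K] M') (g : N →ₗ[K] N')
    (hf : Function.Injective f) (hg : Function.Injective g) :
    Function.Injective (f.prodMap g) := by
  intro a b h
  rw [Prod.ext_iff] at h ⊢
  exact ⟨hf h.1, hg h.2⟩

lemma auxFinrankMap {M M' : Type*} [AddCommGroup M] [AddCommGroup M'] [Module K M]
    [Module K M'] (f : M →ₗ[K] M') (hf : Function.Injective f) (p : Submodule K M) :
    finrank K (p.map f) = finrank K p :=
  (Submodule.equivMapOfInjective f hf p).finrank_eq.symm

lemma auxFinrankProd {M N : Type*} [AddCommGroup M] [AddCommGroup N] [Module K M]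
    [Module K N] [FiniteDimensional K M] [FiniteDimensional K N]
    (p : Submodule K M) (q : Submodule K N) :
    finrank K (p.prod q) = finrank K p + finrank K q := by
  have h := auxProdMapInjective p.subtype q.subtype p.injective_subtype q.injective_subtype
  have hr : LinearMap.range (p.subtype.prodMap q.subtype) = p.prod q := by
    rw [LinearMap.range_eq_map, ← Submodule.prod_top, auxMapProdMap, Submodule.map_top,
      Submodule.map_top, Submodule.range_subtype, Submodule.range_subtype]
  rw [← hr, LinearMap.finrank_range_of_inj h, Module.finrank_prod]

lemma auxRankNullity {M M' : Type*} [AddCommGroup M] [AddCommGroup M'] [Module K M]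
    [Module K M'] [FiniteDimensional K M] (f : M →ₗ[K] M') (p : Submodule K M) :
    finrank K (p.map f) + finrank K (p ⊓ LinearMap.ker f : Submodule K M) = finrank K p := by
  have h := LinearMap.finrank_range_add_finrank_ker (f.comp p.subtype)
  rw [LinearMap.range_comp, Submodule.range_subtype, LinearMap.ker_comp] at h
  rw [← h]
  congr 1
  rw [← Submodule.map_comap_subtype, auxFinrankMap p.subtype p.injective_subtype]

lemma auxOrthSup {P : Type*} [AddCommGroup P] [Module K P] (B : LinearMap.BilinForm K P)
    (s t : Submodule K P) :
    B.orthogonal (s ⊔ t) = B.orthogonal s ⊓ B.orthogonal t := by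
  ext x
  simp only [LinearMap.BilinForm.mem_orthogonal_iff, Submodule.mem_inf]
  constructor
  · exact fun h => ⟨fun n hn => h n (Submodule.mem_sup_left hn),
      fun n hn => h n (Submodule.mem_sup_right hn)⟩
  · rintro ⟨h1, h2⟩ n hn
    obtain ⟨a, ha, b, hb, rfl⟩ := Submodule.mem_sup.mp hn
    have e1 := h1 a ha
    have e2 := h2 b hb
    rw [map_add, LinearMap.add_apply, e1, e2, add_zero]

lemma auxKey {P : Type*} [AddCommGroup P] [Module K P] [FiniteDimensional K P]
    (B : LinearMap.BilinForm K P) (hr : B.IsRefl) (hnd : B.Nondegenerate)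
    (E F : Submodule K P) (hiso : ∀ x ∈ E, ∀ y ∈ E, B x y = 0)
    (hdim : finrank K E + finrank K E = finrank K P) :
    finrank K (E ⊓ F : Submodule K P) + finrank K P
      = finrank K E + finrank K F + finrank K (E ⊓ B.orthogonal F : Submodule K P) := by
  have hEle : E ≤ B.orthogonal E := by
    intro x hx
    rw [LinearMap.BilinForm.mem_orthogonal_iff]
    intro n hn
    exact hiso n hn x hx
  have hEorth : B.orthogonal E = E := by
    refine (Submodule.eq_of_le_of_finrank_le hEle ?_).symm
    rw [LinearMap.BilinForm.finrank_orthogonal hnd]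
    omega
  have h1 := Submodule.finrank_sup_add_finrank_inf_eq E F
  have h2 := LinearMap.BilinForm.finrank_orthogonal hnd (E ⊔ F)
  have h3 : B.orthogonal (E ⊔ F) = E ⊓ B.orthogonal F := by
    rw [auxOrthSup, hEorth]
  rw [h3] at h2
  have h4 : finrank K (E ⊔ F : Submodule K P) ≤ finrank K P := Submodule.finrank_le _
  omega

end Aux

set_option maxHeartbeats 1000000 in
theorem finrank_inducedSub_and_quotSub
    (V : Type*) [AddCommGroup V] [Module ℝ V] [FiniteDimensional ℝ V]
    (E : Submodule ℂ (Cxf V × Module.Dual ℂ (Cxf V))) (hE : IsGCSSub V E)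
    (W : Submodule ℝ V) :
    Module.finrank ℂ ↥(inducedSub E W) = Module.finrank ℝ ↥W ∧
    Module.finrank ℂ ↥(quotSub E W) = Module.finrank ℝ (V ⧸ W) := by
  classical
  obtain ⟨hiso, hdimE, -⟩ := hE
  haveI : FiniteDimensional ℂ (Cxf V) := inferInstance
  haveI : FiniteDimensional ℂ (Cxf ↥W) := inferInstance
  haveI : FiniteDimensional ℂ (Cxf (V ⧸ W)) := inferInstance
  haveI : FiniteDimensional ℂ (Module.Dual ℂ (Cxf V)) := inferInstance
  haveI : FiniteDimensional ℂ (Module.Dual ℂ (Cxf (V ⧸ W))) := inferInstance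
  haveI : FiniteDimensional ℂ (Cxf V × Module.Dual ℂ (Cxf V)) := inferInstance
  set n := finrank ℝ V with hn
  set k := finrank ℝ ↥W with hk
  have hCV : finrank ℂ (Cxf V) = n := Module.finrank_baseChange
  have hCW : finrank ℂ (Cxf ↥W) = k := Module.finrank_baseChange
  have hCQ : finrank ℂ (Cxf (V ⧸ W)) = finrank ℝ (V ⧸ W) := Module.finrank_baseChange
  have hQk : finrank ℝ (V ⧸ W) + k = n := Submodule.finrank_quotient_add_finrank W
  -- The bilinear form
  let B : LinearMap.BilinForm ℂ (Cxf V × Module.Dual ℂ (Cxf V)) :=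
    LinearMap.mk₂ ℂ (fun x y => -(1/2 : ℂ) * (x.2 y.1 + y.2 x.1))
      (by intro m₁ m₂ nn; simp only [Prod.snd_add, LinearMap.add_apply, Prod.fst_add, map_add]; ring)
      (by intro c m nn; simp only [Prod.smul_snd, LinearMap.smul_apply, Prod.smul_fst, map_smul,
        smul_eq_mul]; ring)
      (by intro m nn₁ nn₂; simp only [Prod.fst_add, map_add, Prod.snd_add, LinearMap.add_apply]; ring)
      (by intro c m nn; simp only [Prod.smul_fst, map_smul, Prod.smul_snd, LinearMap.smul_apply,
        smul_eq_mul]; ring)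
  have hBapply : ∀ x y : Cxf V × Module.Dual ℂ (Cxf V), B x y = -(1/2 : ℂ) * (x.2 y.1 + y.2 x.1) := fun _ _ => rfl
  have hhalf : ∀ t : ℂ, (-(1/2 : ℂ) * t = 0) ↔ t = 0 := by
    intro t
    constructor
    · intro h
      rcases mul_eq_zero.mp h with h | h
      · norm_num at h
      · exact h
    · intro h; rw [h, mul_zero]
  have hsymm : ∀ x y : Cxf V × Module.Dual ℂ (Cxf V), B x y = B y x := by
    intro x y; rw [hBapply, hBapply]; ring
  have hr : B.IsRefl := by
    intro x y h; rw [hsymm]; exact h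
  have hnd : B.Nondegenerate := by
    refine (LinearMap.IsRefl.nondegenerate_iff_separatingLeft hr).mpr ?_
    intro x hx
    have h2 : x.2 = 0 := by
      refine LinearMap.ext fun v => ?_
      show x.2 v = 0
      have h := hx (v, 0)
      rw [hBapply, hhalf] at h
      simpa using h
    have h1 : x.1 = 0 := by
      rw [← Module.forall_dual_apply_eq_zero_iff ℂ x.1]
      intro φ
      have h := hx (0, φ)
      rw [hBapply, hhalf] at h
      simpa [h2] using h
    exact Prod.ext h1 h2
  have hiso' : ∀ x ∈ E, ∀ y ∈ E, B x y = 0 := fun x hx y hy => hiso x hx y hy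
  have hPdim : finrank ℂ (Cxf V × Module.Dual ℂ (Cxf V)) = n + n := by
    rw [Module.finrank_prod, Subspace.dual_finrank_eq, hCV]
  have hdimE' : finrank ℂ ↥E + finrank ℂ ↥E = finrank ℂ (Cxf V × Module.Dual ℂ (Cxf V)) := by
    rw [hdimE, hPdim]
  constructor
  · -- Part 1 : E_W
    set u : Cxf ↥W →ₗ[ℂ] Cxf V := cxIncl W with hu_def
    have hu : Function.Injective u := by
      have h : Function.Injective ⇑(LinearMap.lTensor ℂ W.subtype) :=
        Module.Flat.lTensor_preserves_injective_linearMap _ W.injective_subtype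
      show Function.Injective ⇑(W.subtype.baseChange ℂ)
      rw [LinearMap.baseChange_eq_ltensor]
      exact h
    set R : Submodule ℂ (Cxf V) := LinearMap.range u with hR_def
    have hRk : finrank ℂ R = k := by
      rw [hR_def, LinearMap.finrank_range_of_inj hu, hCW]
    have hAnn : finrank ℂ R.dualAnnihilator + finrank ℂ R = finrank ℂ (Cxf V) := by
      have h := Submodule.finrank_quotient_add_finrank R
      rwa [(Subspace.quotEquivAnnihilator R).finrank_eq] at h
    set f1 : (Cxf ↥W × Module.Dual ℂ (Cxf V)) →ₗ[ℂ] (Cxf V × Module.Dual ℂ (Cxf V)) :=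
      (cxIncl W).prodMap LinearMap.id with hf1_def
    set g1 : (Cxf ↥W × Module.Dual ℂ (Cxf V)) →ₗ[ℂ] (Cxf ↥W × Module.Dual ℂ (Cxf ↥W)) :=
      LinearMap.id.prodMap (cxIncl W).dualMap with hg1_def
    have hindeq : inducedSub E W = (E.comap f1).map g1 := rfl
    have hf1inj : Function.Injective f1 :=
      auxProdMapInjective _ _ hu (fun a b h => h)
    have hrange1 : LinearMap.range f1 = R.prod ⊤ := by
      rw [hf1_def, LinearMap.range_eq_map, ← Submodule.prod_top, auxMapProdMap,
        Submodule.map_top, Submodule.map_top, LinearMap.range_id]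
    have hker1 : LinearMap.ker g1 = (⊥ : Submodule ℂ (Cxf ↥W)).prod R.dualAnnihilator := by
      rw [hg1_def, LinearMap.ker_prodMap, LinearMap.ker_id,
        LinearMap.ker_dualMap_eq_dualAnnihilator_range]
    set F1 : Submodule ℂ (Cxf V × Module.Dual ℂ (Cxf V)) := R.prod ⊤ with hF1_def
    set G1 : Submodule ℂ (Cxf V × Module.Dual ℂ (Cxf V)) := (⊥ : Submodule ℂ (Cxf V)).prod R.dualAnnihilator with hG1_def
    have hG1F1 : G1 ≤ F1 := Submodule.prod_mono bot_le le_top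
    have horth1 : B.orthogonal F1 = G1 := by
      ext x
      obtain ⟨v, φ⟩ := x
      simp only [LinearMap.BilinForm.mem_orthogonal_iff, hG1_def, Submodule.mem_prod,
        Submodule.mem_bot]
      constructor
      · intro h
        constructor
        · rw [← Module.forall_dual_apply_eq_zero_iff ℂ v]
          intro ψ
          have hm : ((0 : Cxf V), ψ) ∈ F1 := by
            rw [hF1_def]; exact ⟨R.zero_mem, trivial⟩
          have := h _ hm
          rw [hBapply, hhalf] at this
          simpa using this
        · rw [Submodule.mem_dualAnnihilator]
          intro w hw
          have hm : ((w : Cxf V), (0 : Module.Dual ℂ (Cxf V))) ∈ F1 := by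
            rw [hF1_def]; exact ⟨hw, trivial⟩
          have := h _ hm
          rw [hBapply, hhalf] at this
          simpa using this
      · rintro ⟨hv, hφ⟩ nn hnn
        rw [hF1_def, Submodule.mem_prod] at hnn
        rw [hBapply, hhalf]
        rw [Submodule.mem_dualAnnihilator] at hφ
        simp [hv, hφ nn.1 hnn.1]
    have hF1dim : finrank ℂ F1 = k + n := by
      rw [hF1_def, auxFinrankProd, hRk, finrank_top, Subspace.dual_finrank_eq, hCV]
    have hG1dim : finrank ℂ G1 = finrank ℂ R.dualAnnihilator := by
      rw [hG1_def, auxFinrankProd, finrank_bot, zero_add]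
    have hKey := auxKey B hr hnd E F1 hiso' hdimE'
    rw [horth1] at hKey
    have hcomap : finrank ℂ (E.comap f1) = finrank ℂ (E ⊓ F1 : Submodule ℂ (Cxf V × Module.Dual ℂ (Cxf V))) := by
      rw [← auxFinrankMap f1 hf1inj (E.comap f1), Submodule.map_comap_eq, hrange1, inf_comm]
    have hkerpart : finrank ℂ (E.comap f1 ⊓ LinearMap.ker g1 :
        Submodule ℂ (Cxf ↥W × Module.Dual ℂ (Cxf V)))
        = finrank ℂ (E ⊓ G1 : Submodule ℂ (Cxf V × Module.Dual ℂ (Cxf V))) := by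
      rw [← auxFinrankMap f1 hf1inj, Submodule.map_inf _ hf1inj, Submodule.map_comap_eq,
        hrange1]
      have hmk : (LinearMap.ker g1).map f1 = G1 := by
        rw [hker1, hf1_def, auxMapProdMap, Submodule.map_bot, Submodule.map_id, hG1_def]
      rw [hmk, inf_comm F1 E, inf_assoc, inf_eq_right.mpr hG1F1]
    have hrn := auxRankNullity g1 (E.comap f1)
    rw [← hindeq] at hrn
    omega
  · -- Part 2 : E_{V/W}
    set u2 : Cxf V →ₗ[ℂ] Cxf (V ⧸ W) := LinearMap.baseChange ℂ W.mkQ with hu2_def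
    have hu2surj : Function.Surjective u2 := by
      show Function.Surjective ⇑(W.mkQ.baseChange ℂ)
      rw [LinearMap.baseChange_eq_ltensor]
      exact LinearMap.lTensor_surjective ℂ (Submodule.mkQ_surjective W)
    set K2 : Submodule ℂ (Cxf V) := LinearMap.ker u2 with hK2_def
    have hK2dim : finrank ℂ K2 + finrank ℝ (V ⧸ W) = n := by
      have h := LinearMap.finrank_range_add_finrank_ker u2
      rw [LinearMap.range_eq_top.mpr hu2surj, finrank_top, hCQ, hCV, ← hK2_def] at h
      omega
    have hAnn2 : finrank ℂ K2.dualAnnihilator + finrank ℂ K2 = n := by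
      have h := Submodule.finrank_quotient_add_finrank K2
      rw [(Subspace.quotEquivAnnihilator K2).finrank_eq, hCV] at h
      exact h
    have hdminj : Function.Injective u2.dualMap := by
      rw [← LinearMap.ker_eq_bot, LinearMap.ker_dualMap_eq_dualAnnihilator_range,
        LinearMap.range_eq_top.mpr hu2surj, Submodule.dualAnnihilator_top]
    set h2 : (Cxf V × Module.Dual ℂ (Cxf (V ⧸ W))) →ₗ[ℂ] (Cxf V × Module.Dual ℂ (Cxf V)) :=
      LinearMap.id.prodMap u2.dualMap with hh2_def
    set g2 : (Cxf V × Module.Dual ℂ (Cxf (V ⧸ W))) →ₗ[ℂ]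
        (Cxf (V ⧸ W) × Module.Dual ℂ (Cxf (V ⧸ W))) :=
      u2.prodMap LinearMap.id with hg2_def
    have hquoteq : quotSub E W = (E.comap h2).map g2 := rfl
    have hh2inj : Function.Injective h2 :=
      auxProdMapInjective _ _ (fun a b h => h) hdminj
    have hrange2 : LinearMap.range h2 = (⊤ : Submodule ℂ (Cxf V)).prod K2.dualAnnihilator := by
      rw [hh2_def, LinearMap.range_eq_map, ← Submodule.prod_top, auxMapProdMap,
        Submodule.map_top, Submodule.map_top, LinearMap.range_id,
        LinearMap.range_dualMap_eq_dualAnnihilator_ker]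
    have hker2 : LinearMap.ker g2 = K2.prod (⊥ : Submodule ℂ (Module.Dual ℂ (Cxf (V ⧸ W)))) := by
      rw [hg2_def, LinearMap.ker_prodMap, LinearMap.ker_id]
    set F2 : Submodule ℂ (Cxf V × Module.Dual ℂ (Cxf V)) := (⊤ : Submodule ℂ (Cxf V)).prod K2.dualAnnihilator with hF2_def
    set G2 : Submodule ℂ (Cxf V × Module.Dual ℂ (Cxf V)) := K2.prod (⊥ : Submodule ℂ (Module.Dual ℂ (Cxf V))) with hG2_def
    have hG2F2 : G2 ≤ F2 := Submodule.prod_mono le_top bot_le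
    have horthG2 : B.orthogonal G2 = F2 := by
      ext x
      obtain ⟨v, φ⟩ := x
      simp only [LinearMap.BilinForm.mem_orthogonal_iff, hF2_def, Submodule.mem_prod,
        Submodule.mem_top, true_and]
      constructor
      · intro h
        rw [Submodule.mem_dualAnnihilator]
        intro w hw
        have hm : ((w : Cxf V), (0 : Module.Dual ℂ (Cxf V))) ∈ G2 := by
          rw [hG2_def]; exact ⟨hw, rfl⟩
        have := h _ hm
        rw [hBapply, hhalf] at this
        simpa using this
      · intro hφ nn hnn
        rw [hG2_def, Submodule.mem_prod] at hnn
        rw [hBapply, hhalf]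
        rw [Submodule.mem_dualAnnihilator] at hφ
        have h0 : nn.2 = 0 := hnn.2
        simp [h0, hφ nn.1 hnn.1]
    have horth2 : B.orthogonal F2 = G2 := by
      rw [← horthG2, LinearMap.BilinForm.orthogonal_orthogonal hnd hr]
    have hF2dim : finrank ℂ F2 = n + finrank ℂ K2.dualAnnihilator := by
      rw [hF2_def, auxFinrankProd, finrank_top, hCV]
    have hG2dim : finrank ℂ G2 = finrank ℂ K2 := by
      rw [hG2_def, auxFinrankProd, finrank_bot, add_zero]
    have hKey := auxKey B hr hnd E F2 hiso' hdimE'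
    rw [horth2] at hKey
    have hcomap2 : finrank ℂ (E.comap h2) = finrank ℂ (E ⊓ F2 : Submodule ℂ (Cxf V × Module.Dual ℂ (Cxf V))) := by
      rw [← auxFinrankMap h2 hh2inj (E.comap h2), Submodule.map_comap_eq, hrange2, inf_comm]
    have hkerpart2 : finrank ℂ (E.comap h2 ⊓ LinearMap.ker g2 :
        Submodule ℂ (Cxf V × Module.Dual ℂ (Cxf (V ⧸ W))))
        = finrank ℂ (E ⊓ G2 : Submodule ℂ (Cxf V × Module.Dual ℂ (Cxf V))) := by
      rw [← auxFinrankMap h2 hh2inj, Submodule.map_inf _ hh2inj, Submodule.map_comap_eq,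
        hrange2]
      have hmk : (LinearMap.ker g2).map h2 = G2 := by
        rw [hker2, hh2_def, auxMapProdMap, Submodule.map_bot, Submodule.map_id, hG2_def]
      rw [hmk, inf_comm F2 E, inf_assoc, inf_eq_right.mpr hG2F2]
    have hrn := auxRankNullity g2 (E.comap h2)
    rw [← hquoteq] at hrn
    omega
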